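/- Anyon exclusion principle: if Q(s,t) = q for s < t and Q(s,t) = q̄ for s > t, where q ∈ ℂ satisfies |q| = 1, q ≠ 1, and q^N = 1 for some N ≥ 2, then for every f ∈ L²(T), the N-fold Q-symmetric tensor power f^{⊛N} = P_N(f^{⊗N}) is zero. -/

import Mathlib

open MeasureTheory

/-- `Q_π(t_1,…,t_n) = ∏_{i<j, π(i)>π(j)} Q(t_i,t_j)`. -/
def Qpi {T : Type*} (Q : T → T → ℂ) {n : ℕ} (π : Equiv.Perm (Fin n)) (t : Fin n → T) : ℂ :=
  ∏ p ∈ Finset.univ.filter (fun p : Fin n × Fin n => p.1 < p.2 ∧ π p.2 < π p.1),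
    Q (t p.1) (t p.2)

/-- The `Q`-symmetrization `P_n f = (1/n!) Σ_π Q_π(t) f(t∘π⁻¹)`. -/
noncomputable def Psym {T : Type*} (Q : T → T → ℂ) {n : ℕ} (f : (Fin n → T) → ℂ) :
    (Fin n → T) → ℂ :=
  fun t => ((n.factorial : ℂ))⁻¹ * ∑ π : Equiv.Perm (Fin n), Qpi Q π t * f (t ∘ ⇑π⁻¹)

/-- The anyonic kernel: `Q(s,t) = q` if `s < t`, `q̄` if `t < s` (and `1` on the
diagonal, which is null). -/
noncomputable def anyonQ {T : Type*} [LinearOrder T] (q : ℂ) : T → T → ℂ :=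
  fun s t => if s < t then q else if t < s then (starRingEnd ℂ) q else 1

section AnyonCombinatorics

variable {T : Type*} [LinearOrder T]

private lemma anyonQ_of_lt {q : ℂ} {s t : T} (h : s < t) : anyonQ q s t = q := if_pos h

private lemma anyonQ_of_gt {q : ℂ} {s t : T} (h : t < s) :
    anyonQ q s t = (starRingEnd ℂ) q := by
  unfold anyonQ
  rw [if_neg (not_lt.2 h.le), if_pos h]

private def ins {n : ℕ} (m p : Fin (n + 1)) (e : Equiv.Perm (Fin n)) :
    Equiv.Perm (Fin (n + 1)) :=
  ((finSuccEquiv' m).trans (Equiv.optionCongr e)).trans (finSuccEquiv' p).symm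

private lemma ins_apply_self {n : ℕ} (m p : Fin (n + 1)) (e : Equiv.Perm (Fin n)) :
    ins m p e m = p := by
  simp [ins, finSuccEquiv'_at]

private lemma ins_apply_succAbove {n : ℕ} (m p : Fin (n + 1)) (e : Equiv.Perm (Fin n))
    (i : Fin n) : ins m p e (m.succAbove i) = p.succAbove (e i) := by
  simp [ins]

private lemma ins_bijective {n : ℕ} (m : Fin (n + 1)) :
    Function.Bijective (fun pe : Fin (n + 1) × Equiv.Perm (Fin n) => ins m pe.1 pe.2) := by
  rw [Fintype.bijective_iff_injective_and_card]
  refine ⟨?_, by simp [Fintype.card_perm, Nat.factorial_succ]⟩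
  rintro ⟨p, e⟩ ⟨p', e'⟩ h
  simp only at h
  have hp : p = p' := by
    have := Equiv.ext_iff.1 h m
    rwa [ins_apply_self, ins_apply_self] at this
  subst hp
  have he : e = e' := by
    apply Equiv.ext
    intro i
    have := Equiv.ext_iff.1 h (m.succAbove i)
    rw [ins_apply_succAbove, ins_apply_succAbove] at this
    exact Fin.succAbove_right_injective this
  rw [he]

private lemma card_filter_val_lt (n k : ℕ) (hk : k ≤ n) :
    (Finset.univ.filter fun i : Fin n => (i : ℕ) < k).card = k := by
  rw [← Finset.card_range k]
  refine Finset.card_bij (fun i _ => (i : ℕ)) ?_ ?_ ?_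
  · intro a ha
    simp only [Finset.mem_filter, Finset.mem_univ, true_and] at ha
    simpa using ha
  · intro a _ b _ hab
    exact Fin.val_injective hab
  · intro b hb
    simp only [Finset.mem_range] at hb
    exact ⟨⟨b, lt_of_lt_of_le hb hk⟩, by simpa using hb, rfl⟩

private lemma card_filter_perm_comp {n : ℕ} (e : Equiv.Perm (Fin n)) (P : Fin n → Prop)
    [DecidablePred P] :
    (Finset.univ.filter fun i => P (e i)).card = (Finset.univ.filter P).card := by
  refine Finset.card_bij (fun i _ => e i) ?_ ?_ ?_
  · intro a ha
    simp only [Finset.mem_filter, Finset.mem_univ, true_and] at ha ⊢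
    exact ha
  · intro a _ b _ hab
    exact e.injective hab
  · intro b hb
    simp only [Finset.mem_filter, Finset.mem_univ, true_and] at hb
    exact ⟨e.symm b, by simpa using hb, by simp⟩

private lemma lt_succAbove_iff_val {n : ℕ} (p : Fin (n + 1)) (i : Fin n) :
    p < p.succAbove i ↔ (p : ℕ) ≤ (i : ℕ) := by
  rw [Fin.lt_succAbove_iff_le_castSucc, Fin.le_def, Fin.coe_castSucc]

private lemma succAbove_lt_iff_val {n : ℕ} (p : Fin (n + 1)) (i : Fin n) :
    p.succAbove i < p ↔ (i : ℕ) < (p : ℕ) := by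
  rw [Fin.succAbove_lt_iff_castSucc_lt, Fin.lt_def, Fin.coe_castSucc]

private lemma scalar_eq {q : ℂ} (hq : q * (starRingEnd ℂ) q = 1) {A B M P : ℕ}
    (h : A + P = B + M) :
    (starRingEnd ℂ) q ^ B * q ^ A = q ^ M * (starRingEnd ℂ) q ^ P := by
  have hq0 : q ≠ 0 := by
    rintro rfl
    simp at hq
  have hqb : (starRingEnd ℂ) q = q⁻¹ := eq_inv_of_mul_eq_one_right hq
  have hpow : q ^ A * q ^ P = q ^ B * q ^ M := by
    rw [← pow_add, ← pow_add, h]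
  rw [hqb, inv_pow, inv_pow, inv_mul_eq_div, div_eq_iff (pow_ne_zero _ hq0)]
  field_simp
  linear_combination hpow

private lemma Qpi_ins {n : ℕ} (q : ℂ) (t : Fin (n + 1) → T) (ht : Function.Injective t)
    (m : Fin (n + 1)) (hm : ∀ i, t i ≤ t m) (p : Fin (n + 1)) (e : Equiv.Perm (Fin n)) :
    Qpi (anyonQ q) (ins m p e) t =
      (starRingEnd ℂ) q ^
          (Finset.univ.filter fun i : Fin n => (m : ℕ) ≤ (i : ℕ) ∧ ((e i : ℕ) < (p : ℕ))).card *
        q ^ (Finset.univ.filter fun i : Fin n =>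
              (i : ℕ) < (m : ℕ) ∧ (p : ℕ) ≤ (e i : ℕ)).card *
          Qpi (anyonQ q) e (t ∘ m.succAbove) := by
  classical
  have hlt : ∀ i : Fin (n + 1), i ≠ m → t i < t m := fun i hi =>
    lt_of_le_of_ne (hm i) fun hc => hi (ht hc)
  unfold Qpi
  rw [← Finset.prod_filter_mul_prod_filter_not
    (Finset.univ.filter fun pr : Fin (n + 1) × Fin (n + 1) =>
      pr.1 < pr.2 ∧ ins m p e pr.2 < ins m p e pr.1) (fun pr => pr.1 = m),
    ← Finset.prod_filter_mul_prod_filter_not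
      ((Finset.univ.filter fun pr : Fin (n + 1) × Fin (n + 1) =>
        pr.1 < pr.2 ∧ ins m p e pr.2 < ins m p e pr.1).filter fun pr => ¬pr.1 = m)
      (fun pr => pr.2 = m), mul_assoc]
  congr 1
  · -- pairs (m, j) : each contributes `conj q`
    rw [Finset.prod_congr rfl (g := fun _ => (starRingEnd ℂ) q) ?_, Finset.prod_const]
    · congr 1
      refine (Finset.card_bij (fun (i : Fin n) _ => ((m, m.succAbove i) :
          Fin (n + 1) × Fin (n + 1))) ?_ ?_ ?_).symm
      · intro i hi
        obtain ⟨h1, h2⟩ := (Finset.mem_filter.1 hi).2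
        refine Finset.mem_filter.2 ⟨Finset.mem_filter.2 ⟨Finset.mem_univ _, ?_, ?_⟩, rfl⟩
        · exact (lt_succAbove_iff_val m i).2 h1
        · rw [ins_apply_self, ins_apply_succAbove]
          exact (succAbove_lt_iff_val p (e i)).2 h2
      · intro a _ b _ hab
        exact Fin.succAbove_right_injective (Prod.ext_iff.1 hab).2
      · rintro ⟨x, y⟩ hxy
        simp only [Finset.mem_filter, Finset.mem_univ, true_and] at hxy
        obtain ⟨⟨h1, h2⟩, h3⟩ := hxy
        rw [h3] at h1 h2
        obtain ⟨i, hi⟩ := Fin.exists_succAbove_eq (ne_of_gt h1)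
        rw [← hi] at h1 h2
        rw [ins_apply_self, ins_apply_succAbove] at h2
        refine ⟨i, Finset.mem_filter.2 ⟨Finset.mem_univ _, ?_, ?_⟩, by rw [h3, ← hi]⟩
        · exact (lt_succAbove_iff_val m i).1 h1
        · exact (succAbove_lt_iff_val p (e i)).1 h2
    · rintro ⟨x, y⟩ hxy
      simp only [Finset.mem_filter, Finset.mem_univ, true_and] at hxy
      obtain ⟨⟨h1, _⟩, h3⟩ := hxy
      rw [h3] at h1
      have : t y < t x := by rw [h3]; exact hlt y (ne_of_gt h1)
      exact anyonQ_of_gt this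
  congr 1
  · -- pairs (i, m) : each contributes `q`
    rw [Finset.prod_congr rfl (g := fun _ => q) ?_, Finset.prod_const]
    · congr 1
      refine (Finset.card_bij (fun (i : Fin n) _ => ((m.succAbove i, m) :
          Fin (n + 1) × Fin (n + 1))) ?_ ?_ ?_).symm
      · intro i hi
        obtain ⟨h1, h2⟩ := (Finset.mem_filter.1 hi).2
        refine Finset.mem_filter.2 ⟨Finset.mem_filter.2 ⟨Finset.mem_filter.2
          ⟨Finset.mem_univ _, ?_, ?_⟩, Fin.succAbove_ne m i⟩, rfl⟩
        · exact (succAbove_lt_iff_val m i).2 h1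
        · rw [ins_apply_self, ins_apply_succAbove]
          exact (lt_succAbove_iff_val p (e i)).2 h2
      · intro a _ b _ hab
        exact Fin.succAbove_right_injective (Prod.ext_iff.1 hab).1
      · rintro ⟨x, y⟩ hxy
        simp only [Finset.mem_filter, Finset.mem_univ, true_and] at hxy
        obtain ⟨⟨⟨h1, h2⟩, h4⟩, h3⟩ := hxy
        rw [h3] at h1 h2
        obtain ⟨i, hi⟩ := Fin.exists_succAbove_eq h4
        rw [← hi] at h1 h2
        rw [ins_apply_self, ins_apply_succAbove] at h2
        refine ⟨i, Finset.mem_filter.2 ⟨Finset.mem_univ _, ?_, ?_⟩, by rw [h3, ← hi]⟩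
        · exact (succAbove_lt_iff_val m i).1 h1
        · exact (lt_succAbove_iff_val p (e i)).1 h2
    · rintro ⟨x, y⟩ hxy
      simp only [Finset.mem_filter, Finset.mem_univ, true_and] at hxy
      obtain ⟨⟨⟨h1, _⟩, h4⟩, h3⟩ := hxy
      have : t x < t y := by rw [h3]; exact hlt x h4
      exact anyonQ_of_lt this
  · -- pairs avoiding `m` : reindex along `succAbove`
    refine (Finset.prod_bij
      (fun (pr : Fin n × Fin n) _ => ((m.succAbove pr.1, m.succAbove pr.2) :
        Fin (n + 1) × Fin (n + 1))) ?_ ?_ ?_ ?_).symm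
    · rintro ⟨i, j⟩ hij
      obtain ⟨h1, h2⟩ := (Finset.mem_filter.1 hij).2
      refine Finset.mem_filter.2 ⟨Finset.mem_filter.2 ⟨Finset.mem_filter.2
        ⟨Finset.mem_univ _, ?_, ?_⟩, Fin.succAbove_ne m i⟩, Fin.succAbove_ne m j⟩
      · exact Fin.succAbove_lt_succAbove_iff.2 h1
      · rw [ins_apply_succAbove, ins_apply_succAbove]
        exact Fin.succAbove_lt_succAbove_iff.2 h2
    · rintro ⟨i, j⟩ _ ⟨i', j'⟩ _ hab
      obtain ⟨ha, hb⟩ := Prod.ext_iff.1 hab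
      simp only at ha hb
      exact Prod.ext (Fin.succAbove_right_injective ha) (Fin.succAbove_right_injective hb)
    · rintro ⟨x, y⟩ hxy
      simp only [Finset.mem_filter, Finset.mem_univ, true_and] at hxy
      obtain ⟨⟨⟨h1, h2⟩, h4⟩, h3⟩ := hxy
      obtain ⟨i, hi⟩ := Fin.exists_succAbove_eq h4
      obtain ⟨j, hj⟩ := Fin.exists_succAbove_eq h3
      rw [← hi, ← hj] at h1 h2
      rw [ins_apply_succAbove, ins_apply_succAbove] at h2
      refine ⟨⟨i, j⟩, Finset.mem_filter.2 ⟨Finset.mem_univ _, ?_, ?_⟩, by rw [← hi, ← hj]⟩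
      · exact Fin.succAbove_lt_succAbove_iff.1 h1
      · exact Fin.succAbove_lt_succAbove_iff.1 h2
    · rintro ⟨i, j⟩ _
      rfl

private lemma count_eq {n : ℕ} (m p : Fin (n + 1)) (e : Equiv.Perm (Fin n)) :
    (Finset.univ.filter fun i : Fin n =>
        (i : ℕ) < (m : ℕ) ∧ (p : ℕ) ≤ (e i : ℕ)).card + (p : ℕ) =
      (Finset.univ.filter fun i : Fin n =>
        (m : ℕ) ≤ (i : ℕ) ∧ ((e i : ℕ) < (p : ℕ))).card + (m : ℕ) := by
  classical
  have h1 := Finset.card_filter_add_card_filter_not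
    (s := Finset.univ.filter fun i : Fin n => (i : ℕ) < (m : ℕ))
    (p := fun i => (p : ℕ) ≤ (e i : ℕ))
  have h2 := Finset.card_filter_add_card_filter_not
    (s := Finset.univ.filter fun i : Fin n => (e i : ℕ) < (p : ℕ))
    (p := fun i => (i : ℕ) < (m : ℕ))
  rw [Finset.filter_filter, Finset.filter_filter] at h1 h2
  rw [card_filter_val_lt n (m : ℕ) (by omega)] at h1
  rw [card_filter_perm_comp e (fun v : Fin n => (v : ℕ) < (p : ℕ)),
    card_filter_val_lt n (p : ℕ) (by omega)] at h2
  simp only [not_le, not_lt] at h1 h2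
  have e1 : (Finset.univ.filter fun i : Fin n => (e i : ℕ) < (p : ℕ) ∧ (i : ℕ) < (m : ℕ)) =
      (Finset.univ.filter fun i : Fin n => (i : ℕ) < (m : ℕ) ∧ (e i : ℕ) < (p : ℕ)) := by
    apply Finset.filter_congr
    intro x _
    simp [and_comm]
  have e2 : (Finset.univ.filter fun i : Fin n => (e i : ℕ) < (p : ℕ) ∧ (m : ℕ) ≤ (i : ℕ)) =
      (Finset.univ.filter fun i : Fin n => (m : ℕ) ≤ (i : ℕ) ∧ (e i : ℕ) < (p : ℕ)) := by
    apply Finset.filter_congr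
    intro x _
    simp [and_comm]
  rw [e1, e2] at h2
  omega

private lemma sum_Qpi_eq_zero (q : ℂ) (hq : q * (starRingEnd ℂ) q = 1) (hq1 : q ≠ 1)
    {N : ℕ} (hN : 1 ≤ N) (hqN : q ^ N = 1) (t : Fin N → T) (ht : Function.Injective t) :
    ∑ π : Equiv.Perm (Fin N), Qpi (anyonQ q) π t = 0 := by
  classical
  obtain ⟨n, rfl⟩ : ∃ n, N = n + 1 := ⟨N - 1, (Nat.succ_pred_eq_of_pos hN).symm⟩
  obtain ⟨m, hm⟩ : ∃ m, ∀ i, t i ≤ t m := Finite.exists_max t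
  have key : ∀ (p : Fin (n + 1)) (e : Equiv.Perm (Fin n)),
      Qpi (anyonQ q) (ins m p e) t =
        q ^ (m : ℕ) * (starRingEnd ℂ) q ^ (p : ℕ) *
          Qpi (anyonQ q) e (t ∘ m.succAbove) := by
    intro p e
    rw [Qpi_ins q t ht m hm p e, scalar_eq hq (count_eq m p e)]
  rw [← Function.Bijective.sum_comp (ins_bijective m) fun π => Qpi (anyonQ q) π t]
  rw [Fintype.sum_prod_type]
  simp_rw [key, ← Finset.mul_sum]
  rw [← Finset.sum_mul]
  have hqb1 : (starRingEnd ℂ) q ≠ 1 := by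
    intro h
    apply hq1
    have := congrArg (starRingEnd ℂ) h
    simpa using this
  have hsum0 : (∑ p : Fin (n + 1), q ^ (m : ℕ) * (starRingEnd ℂ) q ^ (p : ℕ)) = 0 := by
    rw [← Finset.mul_sum, Fin.sum_univ_eq_sum_range (fun k => (starRingEnd ℂ) q ^ k),
      geom_sum_eq hqb1]
    have h1 : (starRingEnd ℂ) q ^ (n + 1) = 1 := by
      rw [← map_pow, hqN, map_one]
    rw [h1]
    simp
  rw [hsum0, zero_mul]

end AnyonCombinatorics

private lemma ae_injective_pi {T : Type*} [MeasurableSpace T] (σ : Measure T) [SigmaFinite σ]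
    (hdiag : (σ.prod σ) {p : T × T | p.1 = p.2} = 0) (N : ℕ) :
    ∀ᵐ t ∂(Measure.pi fun _ : Fin N => σ), Function.Injective t := by
  obtain ⟨S, hSsub, hSm, hS0⟩ := exists_measurable_superset_of_null hdiag
  have key : ∀ i j : Fin N, i ≠ j →
      (Measure.pi fun _ : Fin N => σ) ((fun t => (t i, t j)) ⁻¹' S) = 0 := by
    intro i j hij
    cases N with
    | zero => exact i.elim0
    | succ n =>
      obtain ⟨j', hj'⟩ := Fin.exists_succAbove_eq (Ne.symm hij)
      have hmp := measurePreserving_piFinSuccAbove (fun _ : Fin (n + 1) => σ) i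
      have hBm : MeasurableSet ((fun z : T × (Fin n → T) => (z.1, z.2 j')) ⁻¹' S) :=
        (measurable_fst.prodMk ((measurable_pi_apply j').comp measurable_snd)) hSm
      have hset : ((fun t : Fin (n + 1) → T => (t i, t j)) ⁻¹' S) =
          (MeasurableEquiv.piFinSuccAbove (fun _ : Fin (n + 1) => T) i) ⁻¹'
            ((fun z : T × (Fin n → T) => (z.1, z.2 j')) ⁻¹' S) := by
        ext u
        simp [MeasurableEquiv.piFinSuccAbove, Fin.insertNthEquiv, Fin.removeNth, hj']
      rw [hset, hmp.measure_preimage hBm.nullMeasurableSet]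
      rw [Measure.measure_prod_null hBm]
      rw [Measure.measure_prod_null hSm] at hS0
      filter_upwards [hS0] with x hx
      have hcyl : (Prod.mk x ⁻¹' ((fun z : T × (Fin n → T) => (z.1, z.2 j')) ⁻¹' S)) =
          Set.pi Set.univ (Function.update (fun _ : Fin n => (Set.univ : Set T)) j'
            (Prod.mk x ⁻¹' S)) := by
        ext u
        simp only [Set.mem_preimage, Set.mem_pi, Set.mem_univ, true_implies]
        constructor
        · intro h k
          rcases eq_or_ne k j' with rfl | hk
          · simpa [Function.update_self] using h
          · simp [Function.update_of_ne hk]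
        · intro h
          have := h j'
          simpa [Function.update_self] using this
      rw [hcyl, Measure.pi_pi]
      refine Finset.prod_eq_zero (Finset.mem_univ j') ?_
      simpa [Function.update_self] using hx
  rw [MeasureTheory.ae_iff]
  refine measure_mono_null (fun u hu => ?_)
    (measure_iUnion_null (s := fun pr : {pr : Fin N × Fin N // pr.1 ≠ pr.2} =>
      (fun t : Fin N → T => (t pr.1.1, t pr.1.2)) ⁻¹' S) fun pr => key _ _ pr.2)
  simp only [Set.mem_setOf_eq, Function.Injective] at hu
  push_neg at hu
  obtain ⟨a, b, hab, hne⟩ := hu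
  exact Set.mem_iUnion.2 ⟨⟨(a, b), hne⟩, hSsub (by simpa using hab)⟩

/-- anyon exclusion principle: if `q ≠ 1`, `|q| = 1` and `q^N = 1`
(`N ≥ 2`), then the `N`-fold `Q`-symmetric tensor power `f^{⊛N} = P_N(f^{⊗N})`
vanishes (σ^{⊗N}-almost everywhere, the diagonal being null). -/
theorem anyon_exclusion {T : Type*} [LinearOrder T] [MeasurableSpace T]
    (σ : Measure T) [SigmaFinite σ]
    (hdiag : (σ.prod σ) {p : T × T | p.1 = p.2} = 0)
    (q : ℂ) (hq : ‖q‖ = 1) (hq1 : q ≠ 1)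
    (N : ℕ) (hN : 2 ≤ N) (hqN : q ^ N = 1)
    (f : T → ℂ) :
    ∀ᵐ t ∂(Measure.pi fun _ : Fin N => σ),
      Psym (anyonQ q) (fun s => ∏ i, f (s i)) t = 0 := by
  have hqc : q * (starRingEnd ℂ) q = 1 := by
    rw [Complex.mul_conj, Complex.normSq_eq_norm_sq, hq]
    norm_num
  filter_upwards [ae_injective_pi σ hdiag N] with t htI
  have hsum := sum_Qpi_eq_zero q hqc hq1 (by omega : 1 ≤ N) hqN t htI
  unfold Psym
  have hprod : ∀ π : Equiv.Perm (Fin N),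
      (∏ i, f ((t ∘ ⇑π⁻¹) i)) = ∏ i, f (t i) := by
    intro π
    exact Equiv.prod_comp π⁻¹ (fun i => f (t i))
  simp only []
  simp_rw [hprod]
  rw [← Finset.sum_mul, hsum, zero_mul, mul_zero]
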